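/- In the algebra ({a,b,c}, f, g) with f(a)=b, g(a)=c, and f, g fixing both b and c (a, b, c pairwise distinct), the proportion a : b ≈ a : c fails; in particular the common justifications of a→b and a→c form a proper subset of the common justifications of a→b and b→b. -/
import Mathlib


/-- Terms over a language `L` of function symbols with arities `ar`,
with variables indexed by `ℕ`. -/
inductive Term (L : Type) (ar : L → ℕ) : Type
  | var : ℕ → Term L ar
  | app : (f : L) → (Fin (ar f) → Term L ar) → Term L ar

/-- An `L`-algebra. -/
structure Alg (L : Type) (ar : L → ℕ) where
  carrier : Type
  op : (f : L) → (Fin (ar f) → carrier) → carrier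

/-- Evaluation of a term in an algebra under an assignment of the variables. -/
def Term.eval {L : Type} {ar : L → ℕ} (A : Alg L ar) (ρ : ℕ → A.carrier) :
    Term L ar → A.carrier
  | .var n => ρ n
  | .app f ts => A.op f fun i => (ts i).eval A ρ

/-- Homomorphisms of `L`-algebras. -/
def IsHom {L : Type} {ar : L → ℕ} (A B : Alg L ar) (H : A.carrier → B.carrier) : Prop :=
  ∀ (f : L) (as : Fin (ar f) → A.carrier), H (A.op f as) = B.op f (H ∘ as)

/-- Justifications of an arrow `a → b`: pairs of terms `(s, t)` realized under
a common assignment. -/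
def Jus {L : Type} {ar : L → ℕ} (A : Alg L ar) (p : A.carrier × A.carrier) :
    Set (Term L ar × Term L ar) :=
  {st | ∃ ρ : ℕ → A.carrier, st.1.eval A ρ = p.1 ∧ st.2.eval A ρ = p.2}

/-- Trivial justifications in `(A, B)`: those justifying every arrow in `A` and in `B`. -/
def TrivJus {L : Type} {ar : L → ℕ} (A B : Alg L ar) : Set (Term L ar × Term L ar) :=
  {st | (∀ p : A.carrier × A.carrier, st ∈ Jus A p) ∧
        (∀ q : B.carrier × B.carrier, st ∈ Jus B q)}

/-- The arrow relation `(a→b) ≲_{(A,B)} (c→d)`: either all justifications on either side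
are trivial, or the common justifications include a non-trivial one and form a maximal
set among common justification sets with arrows of `B`. -/
def ArrLe {L : Type} {ar : L → ℕ} (A B : Alg L ar)
    (p : A.carrier × A.carrier) (q : B.carrier × B.carrier) : Prop :=
  (Jus A p ∪ Jus B q ⊆ TrivJus A B) ∨
  (TrivJus A B ⊂ Jus A p ∩ Jus B q ∧
    ∀ q' : B.carrier × B.carrier,
      TrivJus A B ⊂ Jus A p ∩ Jus B q → Jus A p ∩ Jus B q ⊆ Jus A p ∩ Jus B q' →
        TrivJus A B ⊂ Jus A p ∩ Jus B q' ∧ Jus A p ∩ Jus B q' ⊆ Jus A p ∩ Jus B q)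

/-- Similarity-based analogical proportion `a : b ≈_{(A,B)} c : d`. -/
def AP {L : Type} {ar : L → ℕ} (A B : Alg L ar) (a b : A.carrier) (c d : B.carrier) : Prop :=
  ArrLe A B (a, b) (c, d) ∧ ArrLe A B (b, a) (d, c) ∧
  ArrLe B A (c, d) (a, b) ∧ ArrLe B A (d, c) (b, a)

/-- Generalizations of an element. -/
def Gen {L : Type} {ar : L → ℕ} (A : Alg L ar) (a : A.carrier) : Set (Term L ar) :=
  {s | ∃ ρ : ℕ → A.carrier, s.eval A ρ = a}

/-- Trivial generalizations in `(A, B)`. -/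
def TrivGen {L : Type} {ar : L → ℕ} (A B : Alg L ar) : Set (Term L ar) :=
  {s | (∀ a : A.carrier, s ∈ Gen A a) ∧ (∀ b : B.carrier, s ∈ Gen B b)}

/-- `a ≲_{(A,B)} b` for elements. -/
def SimLe {L : Type} {ar : L → ℕ} (A B : Alg L ar) (a : A.carrier) (b : B.carrier) : Prop :=
  (Gen A a ∪ Gen B b ⊆ TrivGen A B) ∨
  (TrivGen A B ⊂ Gen A a ∩ Gen B b ∧
    ∀ b' : B.carrier,
      TrivGen A B ⊂ Gen A a ∩ Gen B b → Gen A a ∩ Gen B b ⊆ Gen A a ∩ Gen B b' →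
        TrivGen A B ⊂ Gen A a ∩ Gen B b' ∧ Gen A a ∩ Gen B b' ⊆ Gen A a ∩ Gen B b)

/-- The similarity relation `a ≈_{(A,B)} b`. -/
def Sim {L : Type} {ar : L → ℕ} (A B : Alg L ar) (a : A.carrier) (b : B.carrier) : Prop :=
  SimLe A B a b ∧ SimLe B A b a

/-- The algebra `({a,b,c}, f, g)` with `f(a)=b, g(a)=c`, and `f, g` fixing `b` and `c`,
where `a=0, b=1, c=2` and `true` denotes `f`, `false` denotes `g`. -/
abbrev A19 : Alg Bool (fun _ => 1) :=
  ⟨Fin 3, fun s v => if s then ![1, 1, 2] (v 0) else ![2, 1, 2] (v 0)⟩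

private lemma eval_one_A19 (t : Term Bool (fun _ => 1)) :
    t.eval A19 (fun _ => (1 : Fin 3)) = 1 := by
  induction t with
  | var n => rfl
  | app f ts ih =>
    have h := ih 0
    cases f <;> simp [Term.eval, h]

private lemma jus11_univ : Jus A19 ((1 : Fin 3), 1) = Set.univ := by
  ext st
  simp only [Jus, Set.mem_setOf_eq, Set.mem_univ, iff_true]
  exact ⟨fun _ => 1, eval_one_A19 _, eval_one_A19 _⟩

private def w19 : Term Bool (fun _ => 1) × Term Bool (fun _ => 1) :=
  (Term.var 0, Term.app true (fun _ => Term.var 0))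

private lemma w19_mem_01 : w19 ∈ Jus A19 ((0 : Fin 3), 1) := by
  refine ⟨fun _ => 0, rfl, ?_⟩
  simp [w19, Term.eval]

private lemma w19_not_mem_02 : w19 ∉ Jus A19 ((0 : Fin 3), 2) := by
  rintro ⟨ρ, h1, h2⟩
  have hρ : ρ 0 = 0 := h1
  simp [w19, Term.eval, hρ] at h2

/-- `a : b ≈ a : c` fails; in particular the common justifications of
`a→b` and `a→c` form a proper subset of the common justifications of `a→b` and `b→b`. -/
theorem ap_fails_A19 :
    ¬ AP A19 A19 (0 : Fin 3) 1 0 2 ∧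
      Jus A19 ((0 : Fin 3), 1) ∩ Jus A19 ((0 : Fin 3), 2) ⊂
        Jus A19 ((0 : Fin 3), 1) ∩ Jus A19 ((1 : Fin 3), 1) := by
  have hsub : Jus A19 ((0 : Fin 3), 1) ∩ Jus A19 ((0 : Fin 3), 2) ⊆
      Jus A19 ((0 : Fin 3), 1) ∩ Jus A19 ((1 : Fin 3), 1) := by
    intro st hst
    exact ⟨hst.1, by rw [jus11_univ]; trivial⟩
  have hw11 : w19 ∈ Jus A19 ((0 : Fin 3), 1) ∩ Jus A19 ((1 : Fin 3), 1) := by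
    exact ⟨w19_mem_01, by rw [jus11_univ]; trivial⟩
  constructor
  · rintro ⟨h1, -, -, -⟩
    rcases h1 with hl | ⟨hss, hmax⟩
    · have := (hl (Or.inl w19_mem_01)).1 ((0 : Fin 3), 2)
      exact w19_not_mem_02 this
    · have := (hmax ((1 : Fin 3), 1) hss hsub).2 hw11
      exact w19_not_mem_02 this.2
  · refine ⟨hsub, fun hcon => ?_⟩
    exact w19_not_mem_02 (hcon hw11).2
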